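/- There is an absolute constant C > 0 with the following property. For integers k ≥ 10 and j, j₁, j₂ ≥ 0, let f, g ∈ L²(ℝ²) be such that f(ξ,τ) is supported in {|ξ| ≤ 2} ∩ {(ξ,τ) : |τ-ξ³| ∈ I_{j₁}} and g(ξ,τ) is supported in {2^{k-1} ≤ |ξ| ≤ 2^{k+1}} ∩ {(ξ,τ) : |τ-ξ³| ∈ I_{j₂}}, where I_0 = [0,2] and I_m = [2^{m-1}, 2^{m+1}] for m ≥ 1. Then ‖ 𝟙_{ {2^{k-1} ≤ |ξ| ≤ 2^{k+1},\ |τ-ξ³| ∈ I_j} } · (f * g) ‖_{L²(ℝ²)} ≤ C 2^{-k} 2^{(j₁+j₂)/2} ‖f‖_{L²(ℝ²)} ‖g‖_{L²(ℝ²)}, where * denotes convolution on ℝ². -/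

import Mathlib

open MeasureTheory
open scoped ENNReal NNReal

/-- The dyadic intervals `I_0 = [0,2]` and `I_m = [2^{m-1}, 2^{m+1}]` for `m ≥ 1`. -/
noncomputable def dyadicShell (m : ℕ) : Set ℝ :=
  if m = 0 then Set.Icc 0 2 else Set.Icc ((2 : ℝ) ^ (m - 1)) ((2 : ℝ) ^ (m + 1))

lemma dyadicShell_subset (m : ℕ) : dyadicShell m ⊆ Set.Icc 0 ((2:ℝ) ^ (m+1)) := by
  unfold dyadicShell
  split
  · subst ‹m = 0›; intro x hx; exact ⟨hx.1, by simpa using hx.2.trans (by norm_num)⟩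
  · intro x hx; exact ⟨le_trans (by positivity) hx.1, hx.2⟩

lemma dyadicShell_two_intervals (m : ℕ) : ∃ a b : ℝ, 0 ≤ b - a ∧ b - a ≤ 2 ^ (m+2) ∧
    ∀ x : ℝ, |x| ∈ dyadicShell m → x ∈ Set.Icc a b ∨ x ∈ Set.Icc (-b) (-a) := by
  rcases Nat.eq_zero_or_pos m with h | h
  · refine ⟨-2, 2, by norm_num, by norm_num [h], fun x hx => Or.inl ?_⟩
    have hx' : |x| ∈ Set.Icc (0:ℝ) 2 := by simpa [dyadicShell, h] using hx
    exact abs_le.mp hx'.2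
  · have hmono : (2:ℝ) ^ (m-1) ≤ 2 ^ (m+1) := by
      apply pow_le_pow_right₀ (by norm_num); omega
    refine ⟨(2:ℝ) ^ (m-1), (2:ℝ) ^ (m+1), by linarith, ?_, fun x hx => ?_⟩
    · have h1 : (2:ℝ) ^ (m+1) ≤ 2 ^ (m+2) := by
        apply pow_le_pow_right₀ (by norm_num); omega
      have h2 : (0:ℝ) ≤ 2 ^ (m-1) := by positivity
      linarith
    · have hx' : |x| ∈ Set.Icc ((2:ℝ)^(m-1)) ((2:ℝ)^(m+1)) := by
        simpa [dyadicShell, Nat.pos_iff_ne_zero.mp h] using hx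
      rcases le_or_gt 0 x with hx0 | hx0
      · left; rwa [abs_of_nonneg hx0] at hx'
      · right
        rw [abs_of_neg hx0] at hx'
        exact ⟨by linarith [hx'.2], by linarith [hx'.1]⟩

/-- Measure of the set of `t` where a cubic lies in an interval, given a lower bound
on the derivative. -/
lemma cubic_preimage_vol (A c₀ a b M : ℝ) (hM : 0 < M) :
    volume {t : ℝ | c₀ - (A - t) ^ 3 ∈ Set.Icc a b ∧ M ≤ |A - t|} ≤
      ENNReal.ofReal (2 * (b - a) / M ^ 2) := by
  refine le_trans (Real.volume_le_diam _) (EMetric.diam_le ?_)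
  rintro t ⟨ht1, ht2⟩ s ⟨hs1, hs2⟩
  rw [edist_dist, Real.dist_eq]
  apply ENNReal.ofReal_le_ofReal
  set x := A - t with hx
  set y := A - s with hy
  clear_value x y
  have hxM : M ≤ |x| := ht2
  have hyM : M ≤ |y| := hs2
  have hx2 : M ^ 2 ≤ x ^ 2 := by
    have := sq_abs x
    nlinarith [abs_nonneg x]
  have hq : (3/4) * M ^ 2 ≤ x ^ 2 + x * y + y ^ 2 := by
    nlinarith [sq_nonneg (y + x / 2), hx2]
  have hnn : (0:ℝ) ≤ x ^ 2 + x * y + y ^ 2 := by nlinarith [sq_nonneg (y + x / 2), sq_nonneg x]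
  have hdiff : |y ^ 3 - x ^ 3| ≤ b - a := by
    rw [abs_le]
    constructor <;> nlinarith [ht1.1, ht1.2, hs1.1, hs1.2]
  have hts : t - s = y - x := by rw [hx, hy]; ring
  have hkey : |t - s| * ((3/4) * M ^ 2) ≤ b - a := by
    calc |t - s| * ((3/4) * M ^ 2) ≤ |t - s| * (x ^ 2 + x * y + y ^ 2) := by
          apply mul_le_mul_of_nonneg_left hq (abs_nonneg _)
      _ = |(t - s) * (x ^ 2 + x * y + y ^ 2)| := by
          rw [abs_mul, abs_of_nonneg hnn]
      _ = |y ^ 3 - x ^ 3| := by rw [hts]; ring_nf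
      _ ≤ b - a := hdiff
  rw [le_div_iff₀ (by positivity)]
  nlinarith [abs_nonneg (t - s), sq_nonneg M]

lemma section_vol (k m : ℕ) (hk : 10 ≤ k) (A c₀ : ℝ) :
    volume {t : ℝ | (2:ℝ) ^ (k-1) ≤ |A - t| ∧ |c₀ - (A - t) ^ 3| ∈ dyadicShell m} ≤
      ENNReal.ofReal ((2:ℝ) ^ (m+6) / 2 ^ (2*k)) := by
  obtain ⟨a, b, hba0, hba, hmem⟩ := dyadicShell_two_intervals m
  set M : ℝ := (2:ℝ) ^ (k-1) with hM
  have hMpos : 0 < M := by positivity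
  have hsub : {t : ℝ | (2:ℝ) ^ (k-1) ≤ |A - t| ∧ |c₀ - (A - t) ^ 3| ∈ dyadicShell m} ⊆
      {t : ℝ | c₀ - (A - t) ^ 3 ∈ Set.Icc a b ∧ M ≤ |A - t|} ∪
      {t : ℝ | c₀ - (A - t) ^ 3 ∈ Set.Icc (-b) (-a) ∧ M ≤ |A - t|} := by
    rintro t ⟨h1, h2⟩
    rcases hmem _ h2 with h | h
    · exact Or.inl ⟨h, h1⟩
    · exact Or.inr ⟨h, h1⟩
  refine le_trans (measure_mono hsub) (le_trans (measure_union_le _ _) ?_)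
  have e1 := cubic_preimage_vol A c₀ a b M hMpos
  have e2 := cubic_preimage_vol A c₀ (-b) (-a) M hMpos
  have hba' : -a - -b = b - a := by ring
  rw [hba'] at e2
  refine le_trans (add_le_add e1 e2) ?_
  rw [← ENNReal.ofReal_add (by positivity) (by positivity)]
  · apply ENNReal.ofReal_le_ofReal
    have hM2 : M ^ 2 = (2:ℝ) ^ (2*k - 2) := by
      rw [hM, ← pow_mul]
      congr 1
      omega
    have h2k : (2:ℝ) ^ (2*k) = (2:ℝ) ^ (2*k - 2) * 4 := by
      rw [show 2*k = (2*k - 2) + 2 by omega, pow_add]; norm_num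
    have hba2 : b - a ≤ (2:ℝ) ^ (m+2) := hba
    have hpos : (0:ℝ) < 2 ^ (2*k - 2) := by positivity
    rw [← add_div, div_le_div_iff₀ (by positivity) (by positivity), hM2]
    have hm6 : (2:ℝ) ^ (m+6) = 2 ^ (m+2) * 16 := by
      rw [show m+6 = (m+2)+4 by omega, pow_add]; norm_num
    calc (2 * (b - a) + 2 * (b - a)) * (2:ℝ) ^ (2*k)
        = 4 * (b - a) * ((2:ℝ) ^ (2*k - 2) * 4) := by rw [← h2k]; ring
      _ ≤ 4 * (2:ℝ) ^ (m+2) * ((2:ℝ) ^ (2*k - 2) * 4) := by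
          have h4 : (0:ℝ) ≤ (2:ℝ) ^ (2*k-2) * 4 := by positivity
          nlinarith
      _ = (2:ℝ) ^ (m+6) * 2 ^ (2*k - 2) := by rw [hm6]; ring

lemma measurableSet_dyadicShell (m : ℕ) : MeasurableSet (dyadicShell m) := by
  unfold dyadicShell; split <;> exact measurableSet_Icc

lemma Dset_vol (k j₁ j₂ : ℕ) (hk : 10 ≤ k) (q : ℝ × ℝ) :
    volume {r : ℝ × ℝ | (|r.1| ≤ 2 ∧ |r.2 - r.1 ^ 3| ∈ dyadicShell j₁) ∧
        ((2:ℝ) ^ (k-1) ≤ |q.1 - r.1| ∧ |(q.2 - r.2) - (q.1 - r.1) ^ 3| ∈ dyadicShell j₂)} ≤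
      ENNReal.ofReal ((2:ℝ) ^ (j₁+5) * ((2:ℝ) ^ (j₂+6) / 2 ^ (2*k))) := by
  set D := {r : ℝ × ℝ | (|r.1| ≤ 2 ∧ |r.2 - r.1 ^ 3| ∈ dyadicShell j₁) ∧
      ((2:ℝ) ^ (k-1) ≤ |q.1 - r.1| ∧ |(q.2 - r.2) - (q.1 - r.1) ^ 3| ∈ dyadicShell j₂)} with hD
  have hDm : MeasurableSet D := by
    rw [hD]
    simp only [Set.setOf_and]
    refine MeasurableSet.inter (MeasurableSet.inter ?_ ?_) (MeasurableSet.inter ?_ ?_)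
    · exact measurableSet_le (by fun_prop) measurable_const
    · exact (show Measurable fun r : ℝ × ℝ => |r.2 - r.1 ^ 3| by fun_prop)
        (measurableSet_dyadicShell j₁)
    · exact measurableSet_le measurable_const (by fun_prop)
    · exact (show Measurable fun r : ℝ × ℝ => |(q.2 - r.2) - (q.1 - r.1) ^ 3| by fun_prop)
        (measurableSet_dyadicShell j₂)
  set SB : ℝ≥0∞ := ENNReal.ofReal ((2:ℝ) ^ (j₂+6) / 2 ^ (2*k)) with hSB
  set L : ℝ := 8 + 2 ^ (j₁+1) with hLdef
  have hL : 0 < L := by positivity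
  have hsec : ∀ y : ℝ, volume ((fun x => (x, y)) ⁻¹' D) ≤
      Set.indicator (Set.Icc (-L) L) (fun _ => SB) y := by
    intro y
    by_cases hy : y ∈ Set.Icc (-L) L
    · rw [Set.indicator_of_mem hy]
      refine le_trans (measure_mono ?_) (section_vol k j₂ hk q.1 (q.2 - y))
      rintro x ⟨-, hx2⟩
      exact hx2
    · rw [Set.indicator_of_notMem hy]
      have hemp : ((fun x => (x, y)) ⁻¹' D) = ∅ := by
        ext x
        simp only [Set.mem_preimage, Set.mem_empty_iff_false, iff_false, hD, Set.mem_setOf_eq]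
        rintro ⟨⟨hx1, hx2⟩, -⟩
        apply hy
        have h1 : |y - x ^ 3| ≤ 2 ^ (j₁+1) := ((dyadicShell_subset j₁) hx2).2
        have h2 : |x ^ 3| ≤ 8 := by
          rw [abs_pow]
          calc |x| ^ 3 ≤ 2 ^ 3 := by
                apply pow_le_pow_left₀ (abs_nonneg x) hx1
            _ = 8 := by norm_num
        have h3 : |y| ≤ L := by
          calc |y| ≤ |y - x ^ 3| + |x ^ 3| := by
                have := abs_add_le (y - x ^ 3) (x ^ 3); simpa using this
            _ ≤ 2 ^ (j₁+1) + 8 := add_le_add h1 h2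
            _ = L := by rw [hLdef]; ring
        exact abs_le.mp h3
      rw [hemp]
      simp
  have hvol : volume D = ∫⁻ y, volume ((fun x => (x, y)) ⁻¹' D) := by
    exact MeasureTheory.Measure.prod_apply_symm hDm
  rw [hvol]
  calc ∫⁻ y, volume ((fun x => (x, y)) ⁻¹' D)
      ≤ ∫⁻ y, Set.indicator (Set.Icc (-L) L) (fun _ => SB) y := lintegral_mono hsec
    _ = SB * volume (Set.Icc (-L) L) := lintegral_indicator_const measurableSet_Icc SB
    _ = SB * ENNReal.ofReal (2 * L) := by rw [Real.volume_Icc]; congr 1; ring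
    _ ≤ ENNReal.ofReal ((2:ℝ) ^ (j₁+5) * ((2:ℝ) ^ (j₂+6) / 2 ^ (2*k))) := by
        rw [hSB, ← ENNReal.ofReal_mul (by positivity)]
        apply ENNReal.ofReal_le_ofReal
        have h16 : (16:ℝ) ≤ 2 ^ (j₁+4) := by
          calc (16:ℝ) = 2 ^ 4 := by norm_num
            _ ≤ 2 ^ (j₁+4) := by apply pow_le_pow_right₀ (by norm_num); omega
        have h22 : (2:ℝ) ^ (j₁+2) ≤ 2 ^ (j₁+4) := by
          apply pow_le_pow_right₀ (by norm_num); omega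
        have h5 : (2:ℝ) ^ (j₁+5) = 2 ^ (j₁+4) + 2 ^ (j₁+4) := by
          rw [show j₁+5 = (j₁+4)+1 by omega, pow_succ]; ring
        have hLle : 2 * L ≤ (2:ℝ) ^ (j₁+5) := by
          rw [hLdef, h5]
          have : 2 * ((8:ℝ) + 2 ^ (j₁+1)) = 16 + 2 ^ (j₁+2) := by
            rw [show j₁+2 = (j₁+1)+1 by omega, pow_succ]; ring
          linarith [this.le, h16, h22]
        have hSBpos : (0:ℝ) ≤ (2:ℝ) ^ (j₂+6) / 2 ^ (2*k) := by positivity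
        calc (2:ℝ) ^ (j₂+6) / 2 ^ (2*k) * (2 * L)
            ≤ (2:ℝ) ^ (j₂+6) / 2 ^ (2*k) * 2 ^ (j₁+5) := by
              apply mul_le_mul_of_nonneg_left hLle hSBpos
          _ = (2:ℝ) ^ (j₁+5) * ((2:ℝ) ^ (j₂+6) / 2 ^ (2*k)) := by ring

/-- The low×high → high bilinear convolution estimate in the dyadically localized
Bourgain-space framework: with `f` localized to `|ξ| ≲ 1`, `|τ-ξ³| ∈ I_{j₁}` and `g`
localized to `|ξ| ∼ 2^k`, `|τ-ξ³| ∈ I_{j₂}`, the convolution restricted to frequency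
`∼ 2^k` and modulation `∈ I_j` gains `2^{-k} 2^{(j₁+j₂)/2}`. -/
theorem low_high_convolution_estimate :
    ∃ C > (0 : ℝ), ∀ k j j₁ j₂ : ℕ, 10 ≤ k →
      ∀ f g : ℝ × ℝ → ℂ, MemLp f 2 volume → MemLp g 2 volume →
        (∀ p : ℝ × ℝ, f p ≠ 0 → |p.1| ≤ 2 ∧ |p.2 - p.1 ^ 3| ∈ dyadicShell j₁) →
        (∀ p : ℝ × ℝ, g p ≠ 0 →
          |p.1| ∈ Set.Icc ((2 : ℝ) ^ (k - 1)) ((2 : ℝ) ^ (k + 1)) ∧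
          |p.2 - p.1 ^ 3| ∈ dyadicShell j₂) →
        eLpNorm
            (Set.indicator
              {q : ℝ × ℝ | |q.1| ∈ Set.Icc ((2 : ℝ) ^ (k - 1)) ((2 : ℝ) ^ (k + 1)) ∧
                |q.2 - q.1 ^ 3| ∈ dyadicShell j}
              (fun q : ℝ × ℝ => ∫ r : ℝ × ℝ, f r * g (q - r))) 2 volume ≤
          ENNReal.ofReal
              (C * (2 : ℝ) ^ (-(k : ℝ)) * (2 : ℝ) ^ (((j₁ : ℝ) + (j₂ : ℝ)) / 2)) *
            eLpNorm f 2 volume * eLpNorm g 2 volume := by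
  refine ⟨64, by norm_num, ?_⟩
  intro k j j₁ j₂ hk f g hf hg hfs hgs
  set MD : ℝ := (2:ℝ) ^ (j₁+5) * ((2:ℝ) ^ (j₂+6) / 2 ^ (2*k)) with hMDdef
  have hMDpos : 0 < MD := by positivity
  set Dq : (ℝ × ℝ) → Set (ℝ × ℝ) := fun q =>
    {r : ℝ × ℝ | (|r.1| ≤ 2 ∧ |r.2 - r.1 ^ 3| ∈ dyadicShell j₁) ∧
      ((2:ℝ) ^ (k-1) ≤ |q.1 - r.1| ∧ |(q.2 - r.2) - (q.1 - r.1) ^ 3| ∈ dyadicShell j₂)}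
    with hDq
  have hDm : ∀ q, MeasurableSet (Dq q) := by
    intro q
    rw [hDq]
    simp only [Set.setOf_and]
    refine MeasurableSet.inter (MeasurableSet.inter ?_ ?_) (MeasurableSet.inter ?_ ?_)
    · exact measurableSet_le (by fun_prop) measurable_const
    · exact (show Measurable fun r : ℝ × ℝ => |r.2 - r.1 ^ 3| by fun_prop)
        (measurableSet_dyadicShell j₁)
    · exact measurableSet_le measurable_const (by fun_prop)
    · exact (show Measurable fun r : ℝ × ℝ => |(q.2 - r.2) - (q.1 - r.1) ^ 3| by fun_prop)
        (measurableSet_dyadicShell j₂)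
  have hDvol : ∀ q, volume (Dq q) ≤ ENNReal.ofReal MD := fun q => Dset_vol k j₁ j₂ hk q
  set F1 : ℝ × ℝ → ℝ≥0∞ := fun r => (‖f r‖₊ : ℝ≥0∞) ^ (2:ℝ) with hF1def
  set G1 : ℝ × ℝ → ℝ≥0∞ := fun r => (‖g r‖₊ : ℝ≥0∞) ^ (2:ℝ) with hG1def
  have hF1m : AEMeasurable F1 volume := hf.aestronglyMeasurable.enorm.pow_const (2:ℝ)
  have hG1m : AEMeasurable G1 volume := hg.aestronglyMeasurable.enorm.pow_const (2:ℝ)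
  -- pointwise bound
  have key : ∀ q : ℝ × ℝ, (‖∫ r : ℝ × ℝ, f r * g (q - r)‖₊ : ℝ≥0∞) ^ (2:ℝ) ≤
      ENNReal.ofReal MD * ∫⁻ r, F1 r * G1 (q - r) := by
    intro q
    have hzero : ∀ r, r ∉ Dq q → (‖f r‖₊ : ℝ≥0∞) * (‖g (q - r)‖₊ : ℝ≥0∞) = 0 := by
      intro r hr
      by_contra hne
      apply hr
      have hfr : f r ≠ 0 := by
        intro h0; apply hne; simp [h0]
      have hgr : g (q - r) ≠ 0 := by
        intro h0; apply hne; simp [h0]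
      obtain ⟨hA, hB⟩ := hfs r hfr
      obtain ⟨hC, hE⟩ := hgs (q - r) hgr
      refine ⟨⟨hA, hB⟩, ?_, ?_⟩
      · simpa using hC.1
      · simpa using hE
    have hgm : AEMeasurable (fun r : ℝ × ℝ => (‖g (q - r)‖₊ : ℝ≥0∞)) volume :=
      hg.aestronglyMeasurable.enorm.comp_quasiMeasurePreserving
        (quasiMeasurePreserving_sub_left_of_right_invariant volume q)
    have hψ : AEMeasurable (fun r : ℝ × ℝ => (‖f r‖₊ : ℝ≥0∞) * (‖g (q - r)‖₊ : ℝ≥0∞))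
        volume := hf.aestronglyMeasurable.enorm.mul hgm
    have hφ : AEMeasurable ((Dq q).indicator fun _ => (1:ℝ≥0∞)) volume :=
      (measurable_const.indicator (hDm q)).aemeasurable
    have h2 : ∀ r, (‖f r * g (q - r)‖₊ : ℝ≥0∞) =
        ((Dq q).indicator (fun _ => (1:ℝ≥0∞)) * fun r =>
          (‖f r‖₊ : ℝ≥0∞) * (‖g (q - r)‖₊ : ℝ≥0∞)) r := by
      intro r
      simp only [Pi.mul_apply]
      by_cases hr : r ∈ Dq q
      · rw [Set.indicator_of_mem hr, one_mul, nnnorm_mul, ENNReal.coe_mul]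
      · rw [Set.indicator_of_notMem hr, zero_mul, nnnorm_mul, ENNReal.coe_mul, hzero r hr]
    have h1 : (‖∫ r : ℝ × ℝ, f r * g (q - r)‖₊ : ℝ≥0∞) ≤
        ∫⁻ r, (‖f r * g (q - r)‖₊ : ℝ≥0∞) :=
      enorm_integral_le_lintegral_enorm _
    have hHolder := ENNReal.lintegral_mul_le_Lp_mul_Lq volume
      (Real.HolderConjugate.two_two : Real.HolderConjugate 2 2) hφ hψ
    have hφ2 : (∫⁻ r, ((Dq q).indicator (fun _ => (1:ℝ≥0∞)) r) ^ (2:ℝ)) = volume (Dq q) := by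
      have : ∀ r, ((Dq q).indicator (fun _ => (1:ℝ≥0∞)) r) ^ (2:ℝ) =
          (Dq q).indicator (fun _ => (1:ℝ≥0∞)) r := by
        intro r
        by_cases hr : r ∈ Dq q
        · simp [Set.indicator_of_mem hr]
        · simp [Set.indicator_of_notMem hr, ENNReal.zero_rpow_of_pos]
      rw [lintegral_congr this, lintegral_indicator_const (hDm q), one_mul]
    have hψ2 : ∀ r, ((‖f r‖₊ : ℝ≥0∞) * (‖g (q - r)‖₊ : ℝ≥0∞)) ^ (2:ℝ) =
        F1 r * G1 (q - r) := by
      intro r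
      rw [ENNReal.mul_rpow_of_nonneg _ _ (by norm_num)]
    have step : (‖∫ r : ℝ × ℝ, f r * g (q - r)‖₊ : ℝ≥0∞) ≤
        (ENNReal.ofReal MD) ^ (1/(2:ℝ)) * (∫⁻ r, F1 r * G1 (q - r)) ^ (1/(2:ℝ)) := by
      refine h1.trans ?_
      rw [lintegral_congr h2]
      refine hHolder.trans ?_
      rw [hφ2, lintegral_congr hψ2]
      exact mul_le_mul_left (ENNReal.rpow_le_rpow (hDvol q) (by norm_num)) _
    calc (‖∫ r : ℝ × ℝ, f r * g (q - r)‖₊ : ℝ≥0∞) ^ (2:ℝ)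
        ≤ ((ENNReal.ofReal MD) ^ (1/(2:ℝ)) *
            (∫⁻ r, F1 r * G1 (q - r)) ^ (1/(2:ℝ))) ^ (2:ℝ) :=
          ENNReal.rpow_le_rpow step (by norm_num)
      _ = ENNReal.ofReal MD * ∫⁻ r, F1 r * G1 (q - r) := by
          rw [ENNReal.mul_rpow_of_nonneg _ _ (by norm_num), ← ENNReal.rpow_mul,
            ← ENNReal.rpow_mul]
          norm_num
  -- Tonelli
  have tonelli : (∫⁻ q, ∫⁻ r, F1 r * G1 (q - r)) = (∫⁻ r, F1 r) * ∫⁻ r, G1 r := by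
    have hunc : AEMeasurable (Function.uncurry fun q r : ℝ × ℝ => F1 r * G1 (q - r))
        ((volume : Measure (ℝ × ℝ)).prod volume) := by
      have h1 : AEMeasurable (fun p : (ℝ × ℝ) × (ℝ × ℝ) => F1 p.2)
          ((volume : Measure (ℝ × ℝ)).prod volume) :=
        hF1m.comp_quasiMeasurePreserving Measure.quasiMeasurePreserving_snd
      have h2 : AEMeasurable (fun p : (ℝ × ℝ) × (ℝ × ℝ) => G1 (p.1 - p.2))
          ((volume : Measure (ℝ × ℝ)).prod volume) :=
        hG1m.comp_quasiMeasurePreserving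
          (quasiMeasurePreserving_sub_of_right_invariant volume volume)
      exact h1.mul h2
    rw [lintegral_lintegral_swap hunc]
    have inner : ∀ r : ℝ × ℝ, (∫⁻ q, F1 r * G1 (q - r)) = F1 r * ∫⁻ x, G1 x := by
      intro r
      rw [lintegral_const_mul' _ _ (ENNReal.rpow_ne_top_of_nonneg (by norm_num)
        ENNReal.coe_ne_top)]
      congr 1
      exact (measurePreserving_sub_right volume r).lintegral_comp_emb
        (MeasurableEquiv.subRight r).measurableEmbedding G1
    rw [lintegral_congr inner]
    exact lintegral_mul_const'' _ hF1m
  -- eLpNorm computations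
  have heLp : ∀ (h : ℝ × ℝ → ℂ), eLpNorm h 2 volume =
      (∫⁻ x, (‖h x‖₊ : ℝ≥0∞) ^ (2:ℝ)) ^ (1/(2:ℝ)) := by
    intro h
    rw [eLpNorm_eq_lintegral_rpow_enorm_toReal two_ne_zero ENNReal.ofNat_ne_top]
    norm_num
    rfl
  have main : eLpNorm (fun q : ℝ × ℝ => ∫ r : ℝ × ℝ, f r * g (q - r)) 2 volume ≤
      (ENNReal.ofReal MD) ^ (1/(2:ℝ)) * eLpNorm f 2 volume * eLpNorm g 2 volume := by
    rw [heLp, heLp, heLp]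
    calc (∫⁻ q, (‖∫ r : ℝ × ℝ, f r * g (q - r)‖₊ : ℝ≥0∞) ^ (2:ℝ)) ^ (1/(2:ℝ))
        ≤ (∫⁻ q, ENNReal.ofReal MD * ∫⁻ r, F1 r * G1 (q - r)) ^ (1/(2:ℝ)) :=
          ENNReal.rpow_le_rpow (lintegral_mono key) (by norm_num)
      _ = (ENNReal.ofReal MD * ((∫⁻ r, F1 r) * ∫⁻ r, G1 r)) ^ (1/(2:ℝ)) := by
          rw [lintegral_const_mul' _ _ ENNReal.ofReal_ne_top, tonelli]
      _ = (ENNReal.ofReal MD) ^ (1/(2:ℝ)) * (∫⁻ r, F1 r) ^ (1/(2:ℝ)) *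
            (∫⁻ r, G1 r) ^ (1/(2:ℝ)) := by
          rw [ENNReal.mul_rpow_of_nonneg _ _ (by norm_num),
            ENNReal.mul_rpow_of_nonneg _ _ (by norm_num)]
          ring
      _ = _ := by rw [hF1def, hG1def]
  -- numerics
  have hnum : (ENNReal.ofReal MD) ^ (1/(2:ℝ)) ≤
      ENNReal.ofReal (64 * (2:ℝ) ^ (-(k:ℝ)) * (2:ℝ) ^ (((j₁:ℝ) + (j₂:ℝ)) / 2)) := by
    rw [ENNReal.ofReal_rpow_of_pos hMDpos]
    apply ENNReal.ofReal_le_ofReal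
    have hMD : MD = (2:ℝ) ^ ((((j₁:ℝ)+5) + ((j₂:ℝ)+6) - 2*(k:ℝ))) := by
      rw [Real.rpow_sub two_pos, Real.rpow_add two_pos,
        show ((j₁:ℝ)+5) = ((j₁+5 : ℕ):ℝ) by push_cast; ring,
        show ((j₂:ℝ)+6) = ((j₂+6 : ℕ):ℝ) by push_cast; ring,
        show (2*(k:ℝ)) = ((2*k : ℕ):ℝ) by push_cast; ring,
        Real.rpow_natCast, Real.rpow_natCast, Real.rpow_natCast, hMDdef]
      ring
    have hhalf : MD ^ (1/(2:ℝ)) =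
        (2:ℝ) ^ (((((j₁:ℝ)+5) + ((j₂:ℝ)+6) - 2*(k:ℝ))) * (1/2)) := by
      rw [hMD, ← Real.rpow_mul (by norm_num)]
    have hrhs : 64 * (2:ℝ) ^ (-(k:ℝ)) * (2:ℝ) ^ (((j₁:ℝ) + (j₂:ℝ)) / 2) =
        (2:ℝ) ^ ((6:ℝ) + (-(k:ℝ)) + ((j₁:ℝ) + (j₂:ℝ)) / 2) := by
      rw [Real.rpow_add two_pos, Real.rpow_add two_pos,
        show (6:ℝ) = ((6:ℕ):ℝ) by norm_num, Real.rpow_natCast]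
      norm_num
    rw [hhalf, hrhs]
    apply Real.rpow_le_rpow_of_exponent_le one_le_two
    ring_nf
    linarith
  -- final assembly
  refine le_trans (eLpNorm_indicator_le _) (le_trans main ?_)
  exact mul_le_mul_left (mul_le_mul_left hnum _) _
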